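/- Let B = {(x,y) ∈ ℤ² : x+y < 0 and y > 0} and D = {(x,y) ∈ ℤ² : x+y > 0 and y ≤ 0}. Then G(B) ⊆ D ∪ A and G(D) ⊆ B ∪ C, where A = {(x,y) : x+y>0, y>0} and C = {(x,y) : x+y<0, y≤0}. Moreover no orbit can alternate between B and D forever: if for all n the point G^{2n}((x,y)) stayed in B (with the map B→D→B applying the formula G²((x,y)) = (-x-2y+1, 2x+3y-2)), then the first coordinate of G^{2n}((x,y)), which equals n² - (2n-1)x - 2ny, tends to +∞, contradicting nonpositivity of the first coordinates there. -/
import Mathlib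


def G (p : ℤ × ℤ) : ℤ × ℤ :=
  if p.2 ≤ 0 then (p.2, -p.1 - 2 * p.2) else (p.2, -p.1 - 2 * p.2 + 1)

def inA (p : ℤ × ℤ) : Prop := 0 < p.1 + p.2 ∧ 0 < p.2
def inB (p : ℤ × ℤ) : Prop := p.1 + p.2 < 0 ∧ 0 < p.2
def inC (p : ℤ × ℤ) : Prop := p.1 + p.2 < 0 ∧ p.2 ≤ 0
def inD (p : ℤ × ℤ) : Prop := 0 < p.1 + p.2 ∧ p.2 ≤ 0

lemma GG_fst (p : ℤ × ℤ) (h : 0 < p.2) : (G (G p)).1 = -p.1 - 2 * p.2 + 1 := by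
  obtain ⟨x, y⟩ := p
  simp only [G]
  split <;> split <;> simp_all <;> omega

theorem stmt8 :
    (∀ p : ℤ × ℤ, inB p → inD (G p) ∨ inA (G p)) ∧
    (∀ p : ℤ × ℤ, inD p → inB (G p) ∨ inC (G p)) ∧
    (∀ p : ℤ × ℤ, inB p → ¬ ∀ n : ℕ, inB ((G ∘ G)^[n] p)) := by
  refine ⟨?_, ?_, ?_⟩
  · rintro ⟨x, y⟩ ⟨h1, h2⟩
    simp only [inD, inA, G]
    split <;> simp_all <;> omega
  · rintro ⟨x, y⟩ ⟨h1, h2⟩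
    simp only [inB, inC, G]
    split <;> simp_all <;> omega
  · intro p hp hall
    set q : ℕ → ℤ × ℤ := fun n => (G ∘ G)^[n] p with hq
    have key : ∀ n, p.1 + 3 * n ≤ (q n).1 := by
      intro n
      induction n with
      | zero => simp [hq]
      | succ n ih =>
        have hBn : inB (q n) := hall n
        have hstep : (q (n+1)).1 = -(q n).1 - 2 * (q n).2 + 1 := by
          have : q (n+1) = G (G (q n)) := by
            simp [hq, Function.iterate_succ_apply']
          rw [this, GG_fst _ hBn.2]
        have h1 := hBn.1
        push_cast [hstep]
        push_cast at ih
        omega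
    have hn : p.1 + 3 * (p.1.natAbs : ℤ) ≤ ((G ∘ G)^[p.1.natAbs] p).1 := key p.1.natAbs
    have hB0 : inB p := hp
    have hneg : p.1 < 0 := by have := hB0.1; have := hB0.2; omega
    have hBn := hall p.1.natAbs
    have h1 := hBn.1
    have h2 := hBn.2
    have : (p.1.natAbs : ℤ) = -p.1 := by omega
    omega
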